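/- Let α ≥ 0 and b > 0 be real constants with 2αb < 1, and set α̂ = α/(1 − 2αb) and γ = b(1 − αb)/(1 − 2αb). Let y, u : [0,∞) → ℝ^m be locally integrable functions with |u|², |y|² and ⟨y,u⟩ locally integrable, and let V : [0,∞) → ℝ be a function such that V(T) − V(0) ≤ ∫_0^T (⟨y(t), u(t)⟩ + α|u(t)|²) dt for every T ≥ 0. Define û(t) = u(t) + b·y(t) and V̂(T) = V(T)/(1 − 2αb). Then V̂(T) − V̂(0) ≤ ∫_0^T (⟨y(t), û(t)⟩ + α̂|û(t)|² − γ|y(t)|²) dt for every T ≥ 0. -/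

import Mathlib

open RealInnerProductSpace MeasureTheory

/-- Lemma 2: if `V(T) - V(0) ≤ ∫_0^T (⟪y,u⟫ + α‖u‖²)` for all `T ≥ 0`, then with
`û = u + b•y`, `α̂ = α/(1-2αb)`, `γ = b(1-αb)/(1-2αb)` and `V̂ = V/(1-2αb)`,
`V̂(T) - V̂(0) ≤ ∫_0^T (⟪y,û⟫ + α̂‖û‖² - γ‖y‖²)` for all `T ≥ 0`. -/
theorem ifp_input_transformation
    (m : ℕ) (α b : ℝ) (hα : 0 ≤ α) (hb : 0 < b) (hab : 2 * α * b < 1)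
    (y u : ℝ → EuclideanSpace ℝ (Fin m)) (V : ℝ → ℝ)
    (hyu_int : ∀ T, 0 ≤ T → IntervalIntegrable (fun t => ⟪y t, u t⟫) volume 0 T)
    (hu_int : ∀ T, 0 ≤ T → IntervalIntegrable (fun t => ‖u t‖ ^ 2) volume 0 T)
    (hy_int : ∀ T, 0 ≤ T → IntervalIntegrable (fun t => ‖y t‖ ^ 2) volume 0 T)
    (hdiss : ∀ T, 0 ≤ T →
      V T - V 0 ≤ ∫ t in (0 : ℝ)..T, (⟪y t, u t⟫ + α * ‖u t‖ ^ 2)) :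
    ∀ T, 0 ≤ T →
      V T / (1 - 2 * α * b) - V 0 / (1 - 2 * α * b) ≤
        ∫ t in (0 : ℝ)..T,
          (⟪y t, u t + b • y t⟫
            + (α / (1 - 2 * α * b)) * ‖u t + b • y t‖ ^ 2
            - (b * (1 - α * b) / (1 - 2 * α * b)) * ‖y t‖ ^ 2) := by
  intro T hT
  have hc : 0 < 1 - 2 * α * b := by linarith
  have key : ∀ t, (⟪y t, u t + b • y t⟫
      + (α / (1 - 2 * α * b)) * ‖u t + b • y t‖ ^ 2
      - (b * (1 - α * b) / (1 - 2 * α * b)) * ‖y t‖ ^ 2)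
      = (1 / (1 - 2 * α * b)) * (⟪y t, u t⟫ + α * ‖u t‖ ^ 2) := by
    intro t
    have h1 : ⟪y t, u t + b • y t⟫ = ⟪y t, u t⟫ + b * ‖y t‖ ^ 2 := by
      rw [inner_add_right, real_inner_smul_right, real_inner_self_eq_norm_sq]
    have h2 : ‖u t + b • y t‖ ^ 2
        = ‖u t‖ ^ 2 + 2 * (b * ⟪u t, y t⟫) + b ^ 2 * ‖y t‖ ^ 2 := by
      rw [norm_add_sq_real, real_inner_smul_right, norm_smul, Real.norm_eq_abs,
        mul_pow, sq_abs]
    have h3 : ⟪u t, y t⟫ = ⟪y t, u t⟫ := real_inner_comm _ _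
    rw [h1, h2, h3]
    have hinv : (1 - 2 * α * b) * (1 - 2 * α * b)⁻¹ = 1 := mul_inv_cancel₀ hc.ne'
    linear_combination (-(⟪y t, u t⟫ + b * ‖y t‖ ^ 2)) * hinv
  rw [intervalIntegral.integral_congr (g := fun t =>
      (1 / (1 - 2 * α * b)) * (⟪y t, u t⟫ + α * ‖u t‖ ^ 2)) (fun t _ => key t),
    intervalIntegral.integral_const_mul]
  have h4 := hdiss T hT
  have h5 : (V T - V 0) / (1 - 2 * α * b)
      ≤ (∫ t in (0 : ℝ)..T, (⟪y t, u t⟫ + α * ‖u t‖ ^ 2)) / (1 - 2 * α * b) :=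
    by gcongr
  calc V T / (1 - 2 * α * b) - V 0 / (1 - 2 * α * b)
      = (V T - V 0) / (1 - 2 * α * b) := by ring
    _ ≤ (∫ t in (0 : ℝ)..T, (⟪y t, u t⟫ + α * ‖u t‖ ^ 2)) / (1 - 2 * α * b) := h5
    _ = (1 / (1 - 2 * α * b)) * ∫ t in (0 : ℝ)..T, (⟪y t, u t⟫ + α * ‖u t‖ ^ 2) := by ring
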